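/- Let A be an n×n real matrix, F : ℝⁿ → ℝⁿ Lipschitz continuous with Lipschitz constant L, and set C′ = ‖A‖ + L. Let z : [0,1] → ℝⁿ be continuous with z(0) = 0 and x ∈ ℝⁿ. Suppose X, Y : [0,1] → ℝⁿ are continuous and satisfy X(t) = x + ∫₀ᵗ ( A X(s) + F(X(s)) ) ds + z(t) and Y(t) = x + ∫₀ᵗ ( A Y(s) + F(Y(s)) ) ds for all t ∈ [0,1]. Then |X(t) − Y(t)| ≤ |z(t)| + C′ ∫₀ᵗ |z(s)| e^{(t−s)C′} ds for all t ∈ [0,1]. -/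

import Mathlib

noncomputable section

/-- `ℝⁿ` as a Euclidean space. -/
abbrev En (n : ℕ) := EuclideanSpace ℝ (Fin n)

/-- A matrix acting on `ℝⁿ` as a continuous linear operator. -/
def matCLM (n : ℕ) (A : Matrix (Fin n) (Fin n) ℝ) : En n →L[ℝ] En n :=
  Matrix.toEuclideanCLM (𝕜 := ℝ) A

private lemma gronwall_aux (g a : ℝ → ℝ) (C : ℝ) (hC : 0 ≤ C)
    (hg : Continuous g) (ha : Continuous a)
    (hkey : ∀ t ∈ Set.Icc (0:ℝ) 1, g t ≤ a t + C * ∫ s in (0:ℝ)..t, g s) :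
    ∀ t ∈ Set.Icc (0:ℝ) 1,
      g t ≤ a t + C * ∫ s in (0:ℝ)..t, a s * Real.exp ((t - s) * C) := by
  set u : ℝ → ℝ := fun t => ∫ s in (0:ℝ)..t, g s with hu_def
  have hu : ∀ t : ℝ, HasDerivAt u (g t) t := fun t =>
    intervalIntegral.integral_hasDerivAt_right (hg.intervalIntegrable _ _)
      (hg.stronglyMeasurable.stronglyMeasurableAtFilter) hg.continuousAt
  set b : ℝ → ℝ := fun t => a t * Real.exp (-C * t) with hb_def
  have hb : Continuous b := ha.mul ((continuous_const.mul continuous_id).rexp)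
  set v : ℝ → ℝ := fun t => ∫ s in (0:ℝ)..t, b s with hv_def
  have hv : ∀ t : ℝ, HasDerivAt v (b t) t := fun t =>
    intervalIntegral.integral_hasDerivAt_right (hb.intervalIntegrable _ _)
      (hb.stronglyMeasurable.stronglyMeasurableAtFilter) hb.continuousAt
  have hexp : ∀ t : ℝ, HasDerivAt (fun t => Real.exp (-C * t))
      (Real.exp (-C * t) * (-C)) t := by
    intro t
    have := ((hasDerivAt_id t).const_mul (-C)).exp
    simpa [mul_comm] using this
  set h : ℝ → ℝ := fun t => v t - u t * Real.exp (-C * t) with hh_def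
  have hh : ∀ t : ℝ, HasDerivAt h ((a t + C * u t - g t) * Real.exp (-C * t)) t := by
    intro t
    have h2 := (hu t).mul (hexp t)
    have := (hv t).sub h2
    refine this.congr_deriv ?_
    simp only [hb_def]
    ring
  have hmono : MonotoneOn h (Set.Icc 0 1) := by
    apply monotoneOn_of_deriv_nonneg (convex_Icc 0 1)
    · exact Continuous.continuousOn <| continuous_iff_continuousAt.2 fun t =>
        (hh t).differentiableAt.continuousAt
    · exact fun t _ => (hh t).differentiableAt.differentiableWithinAt
    · intro t ht
      rw [interior_Icc] at ht
      rw [(hh t).deriv]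
      have := hkey t ⟨le_of_lt ht.1, le_of_lt ht.2⟩
      have h1 : 0 ≤ a t + C * u t - g t := by simpa [hu_def] using sub_nonneg.2 this
      positivity
  intro t ht
  have h0 : h 0 = 0 := by simp [hh_def, hv_def, hu_def]
  have hle : 0 ≤ h t := by
    rw [← h0]
    exact hmono (by simp : (0:ℝ) ∈ Set.Icc (0:ℝ) 1) ht ht.1
  have huv : u t * Real.exp (-C * t) ≤ v t := by
    have := hle; simp only [hh_def] at this; linarith
  have hut : u t ≤ Real.exp (C * t) * v t := by
    have hmul := mul_le_mul_of_nonneg_left huv (Real.exp_pos (C * t)).le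
    have hz : C * t + -C * t = 0 := by ring
    calc u t = Real.exp (C * t) * (u t * Real.exp (-C * t)) := by
          rw [mul_comm (u t), ← mul_assoc, ← Real.exp_add, hz, Real.exp_zero, one_mul]
      _ ≤ Real.exp (C * t) * v t := hmul
  have hvt : Real.exp (C * t) * v t = ∫ s in (0:ℝ)..t, a s * Real.exp ((t - s) * C) := by
    rw [hv_def, ← intervalIntegral.integral_const_mul]
    apply intervalIntegral.integral_congr
    intro s _
    show Real.exp (C * t) * (a s * Real.exp (-C * s)) = a s * Real.exp ((t - s) * C)
    rw [mul_left_comm, ← Real.exp_add]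
    congr 2
    ring
  calc g t ≤ a t + C * u t := hkey t ht
    _ ≤ a t + C * ∫ s in (0:ℝ)..t, a s * Real.exp ((t - s) * C) := by
        rw [← hvt]
        have := mul_le_mul_of_nonneg_left hut hC
        linarith

/-- Gronwall-type comparison: if `X` solves the equation perturbed by `z`
and `Y` solves the unperturbed one, with the same initial datum `x`, then
`|X(t) − Y(t)| ≤ |z(t)| + C′ ∫₀ᵗ |z(s)| e^{(t−s)C′} ds` on `[0,1]`,
where `C′ = ‖A‖ + L`. -/
theorem stmt16 (n : ℕ) (A : Matrix (Fin n) (Fin n) ℝ) (F : En n → En n)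
    (L : NNReal) (hF : LipschitzWith L F)
    (z : ℝ → En n) (hz : ContinuousOn z (Set.Icc 0 1)) (hz0 : z 0 = 0)
    (x : En n) (X Y : ℝ → En n)
    (hX : ContinuousOn X (Set.Icc 0 1)) (hY : ContinuousOn Y (Set.Icc 0 1))
    (heqX : ∀ t ∈ Set.Icc (0 : ℝ) 1,
      X t = x + (∫ s in (0:ℝ)..t, (matCLM n A (X s) + F (X s))) + z t)
    (heqY : ∀ t ∈ Set.Icc (0 : ℝ) 1,
      Y t = x + ∫ s in (0:ℝ)..t, (matCLM n A (Y s) + F (Y s))) :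
    ∀ t ∈ Set.Icc (0 : ℝ) 1,
      ‖X t - Y t‖ ≤ ‖z t‖ + (‖matCLM n A‖ + L) *
        ∫ s in (0:ℝ)..t, ‖z s‖ * Real.exp ((t - s) * (‖matCLM n A‖ + L)) := by
  set C : ℝ := ‖matCLM n A‖ + L with hC_def
  have hC : 0 ≤ C := add_nonneg (norm_nonneg _) L.coe_nonneg
  have hFc : Continuous F := hF.continuous
  -- extensions
  have h01 : (0:ℝ) ≤ 1 := zero_le_one
  set Xe : ℝ → En n := Set.IccExtend h01 ((Set.Icc (0:ℝ) 1).restrict X) with hXe_def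
  set Ye : ℝ → En n := Set.IccExtend h01 ((Set.Icc (0:ℝ) 1).restrict Y) with hYe_def
  set ze : ℝ → En n := Set.IccExtend h01 ((Set.Icc (0:ℝ) 1).restrict z) with hze_def
  have hXe : Continuous Xe := (continuousOn_iff_continuous_restrict.1 hX).Icc_extend'
  have hYe : Continuous Ye := (continuousOn_iff_continuous_restrict.1 hY).Icc_extend'
  have hzec : Continuous ze := (continuousOn_iff_continuous_restrict.1 hz).Icc_extend'
  have hXeq : ∀ t ∈ Set.Icc (0:ℝ) 1, Xe t = X t := fun t ht => Set.IccExtend_of_mem h01 _ ht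
  have hYeq : ∀ t ∈ Set.Icc (0:ℝ) 1, Ye t = Y t := fun t ht => Set.IccExtend_of_mem h01 _ ht
  have hzeq : ∀ t ∈ Set.Icc (0:ℝ) 1, ze t = z t := fun t ht => Set.IccExtend_of_mem h01 _ ht
  set g : ℝ → ℝ := fun t => ‖Xe t - Ye t‖ with hg_def
  set a : ℝ → ℝ := fun t => ‖ze t‖ with ha_def
  have hgc : Continuous g := (hXe.sub hYe).norm
  have hac : Continuous a := hzec.norm
  -- key integral inequality
  have hkey : ∀ t ∈ Set.Icc (0:ℝ) 1, g t ≤ a t + C * ∫ s in (0:ℝ)..t, g s := by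
    intro t ht
    have hsub : Set.uIcc (0:ℝ) t ⊆ Set.Icc 0 1 := by
      rw [Set.uIcc_of_le ht.1]
      exact Set.Icc_subset_Icc le_rfl ht.2
    have hiX : IntervalIntegrable (fun s => matCLM n A (X s) + F (X s)) MeasureTheory.volume 0 t :=
      (((matCLM n A).continuous.comp_continuousOn (hX.mono hsub)).add
        (hFc.comp_continuousOn (hX.mono hsub))).intervalIntegrable
    have hiY : IntervalIntegrable (fun s => matCLM n A (Y s) + F (Y s)) MeasureTheory.volume 0 t :=
      (((matCLM n A).continuous.comp_continuousOn (hY.mono hsub)).add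
        (hFc.comp_continuousOn (hY.mono hsub))).intervalIntegrable
    have hdiff : X t - Y t = (∫ s in (0:ℝ)..t,
        ((matCLM n A (X s) + F (X s)) - (matCLM n A (Y s) + F (Y s)))) + z t := by
      rw [heqX t ht, heqY t ht, intervalIntegral.integral_sub hiX hiY]
      abel
    have hbound : ∀ s ∈ Set.Icc (0:ℝ) t,
        ‖(matCLM n A (X s) + F (X s)) - (matCLM n A (Y s) + F (Y s))‖ ≤ C * g s := by
      intro s hs
      have hs1 : s ∈ Set.Icc (0:ℝ) 1 := ⟨hs.1, hs.2.trans ht.2⟩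
      have e1 : (matCLM n A (X s) + F (X s)) - (matCLM n A (Y s) + F (Y s)) =
          matCLM n A (X s - Y s) + (F (X s) - F (Y s)) := by
        rw [map_sub]; abel
      rw [e1]
      have h1 : ‖matCLM n A (X s - Y s)‖ ≤ ‖matCLM n A‖ * ‖X s - Y s‖ :=
        (matCLM n A).le_opNorm _
      have h2 : ‖F (X s) - F (Y s)‖ ≤ L * ‖X s - Y s‖ := by
        have := hF.dist_le_mul (X s) (Y s)
        simpa [dist_eq_norm] using this
      have hgs : g s = ‖X s - Y s‖ := by rw [hg_def]; simp [hXeq s hs1, hYeq s hs1]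
      calc ‖matCLM n A (X s - Y s) + (F (X s) - F (Y s))‖
          ≤ ‖matCLM n A (X s - Y s)‖ + ‖F (X s) - F (Y s)‖ := norm_add_le _ _
        _ ≤ ‖matCLM n A‖ * ‖X s - Y s‖ + L * ‖X s - Y s‖ := add_le_add h1 h2
        _ = C * g s := by rw [hgs, hC_def]; ring
    have hnorm : ‖X t - Y t‖ ≤ (∫ s in (0:ℝ)..t,
        ‖(matCLM n A (X s) + F (X s)) - (matCLM n A (Y s) + F (Y s))‖) + ‖z t‖ := by
      rw [hdiff]
      exact (norm_add_le _ _).trans (add_le_add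
        (intervalIntegral.norm_integral_le_integral_norm ht.1) le_rfl)
    have hmono : (∫ s in (0:ℝ)..t,
        ‖(matCLM n A (X s) + F (X s)) - (matCLM n A (Y s) + F (Y s))‖)
        ≤ ∫ s in (0:ℝ)..t, C * g s := by
      apply intervalIntegral.integral_mono_on ht.1 ((hiX.sub hiY).norm)
        ((continuous_const.mul hgc).intervalIntegrable _ _)
      exact hbound
    have hint : (∫ s in (0:ℝ)..t, C * g s) = C * ∫ s in (0:ℝ)..t, g s :=
      intervalIntegral.integral_const_mul _ _
    have hgt : g t = ‖X t - Y t‖ := by rw [hg_def]; simp [hXeq t ht, hYeq t ht]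
    have hat : a t = ‖z t‖ := by rw [ha_def]; simp [hzeq t ht]
    rw [hgt, hat]
    calc ‖X t - Y t‖ ≤ (∫ s in (0:ℝ)..t,
          ‖(matCLM n A (X s) + F (X s)) - (matCLM n A (Y s) + F (Y s))‖) + ‖z t‖ := hnorm
      _ ≤ (∫ s in (0:ℝ)..t, C * g s) + ‖z t‖ := add_le_add hmono le_rfl
      _ = ‖z t‖ + C * ∫ s in (0:ℝ)..t, g s := by rw [hint]; ring
  have main := gronwall_aux g a C hC hgc hac hkey
  intro t ht
  have := main t ht
  have hgt : g t = ‖X t - Y t‖ := by rw [hg_def]; simp [hXeq t ht, hYeq t ht]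
  have hat : a t = ‖z t‖ := by rw [ha_def]; simp [hzeq t ht]
  have hint : (∫ s in (0:ℝ)..t, a s * Real.exp ((t - s) * C))
      = ∫ s in (0:ℝ)..t, ‖z s‖ * Real.exp ((t - s) * C) := by
    apply intervalIntegral.integral_congr
    intro s hs
    have hs1 : s ∈ Set.Icc (0:ℝ) 1 := by
      rw [Set.uIcc_of_le ht.1] at hs
      exact ⟨hs.1, hs.2.trans ht.2⟩
    simp [ha_def, hzeq s hs1]
  rw [hgt, hat, hint] at this
  exact this

end
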